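/- arXiv:1303.0301 — 2 statements merged into one kernel-verified Lean document; each statement's English description precedes it below -/
import Mathlib

section
/- Let Ω ⊆ ℝ² be open and let u : Ω → ℝ be twice differentiable with u < 0 on Ω, satisfying ‖∇u(x)‖²·Δu(x) − ∇²u(x)(∇u(x), ∇u(x)) = 1 for all x ∈ Ω. Then the function φ := −log(−u) is twice differentiable on Ω and satisfies ‖∇φ(x)‖²·Δφ(x) − ∇²φ(x)(∇φ(x), ∇φ(x)) = e^{3φ(x)} for all x ∈ Ω; equivalently, ‖∇φ‖² · Σ_{i,j} (δ_{ij} − φ_i φ_j / ‖∇φ‖²) φ_{ij} = e^{3φ} wherever ∇φ ≠ 0. -/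
open Real Set

noncomputable section

/-- The Hessian of `u` at `x`, as a bilinear map (the derivative of the derivative). -/
noncomputable def hessianBilin (u : EuclideanSpace ℝ (Fin 2) → ℝ) (x : EuclideanSpace ℝ (Fin 2)) :
    EuclideanSpace ℝ (Fin 2) →L[ℝ] EuclideanSpace ℝ (Fin 2) →L[ℝ] ℝ :=
  fderiv ℝ (fun y => fderiv ℝ u y) x

/-- The Laplacian of `u` at `x`: the trace of the Hessian, computed in the standard
orthonormal basis of `ℝ²`. -/
noncomputable def laplacian2 (u : EuclideanSpace ℝ (Fin 2) → ℝ) (x : EuclideanSpace ℝ (Fin 2)) : ℝ :=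
  ∑ i : Fin 2, hessianBilin u x (EuclideanSpace.single i 1) (EuclideanSpace.single i 1)

/-- `u` is twice differentiable on `S`. -/
def TwiceDiffOn (u : EuclideanSpace ℝ (Fin 2) → ℝ) (S : Set (EuclideanSpace ℝ (Fin 2))) : Prop :=
  ∀ x ∈ S, DifferentiableAt ℝ u x ∧ DifferentiableAt ℝ (fun y => fderiv ℝ u y) x

lemma hasFDerivAt_phi_aux (u : EuclideanSpace ℝ (Fin 2) → ℝ) (y : EuclideanSpace ℝ (Fin 2))
    (hd : DifferentiableAt ℝ u y) (hneg : u y < 0) :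
    HasFDerivAt (fun z => -Real.log (-u z)) ((-(u y)⁻¹) • fderiv ℝ u y) y := by
  have hne : -u y ≠ 0 := by linarith
  have h1 : HasFDerivAt (fun z => -u z) (-(fderiv ℝ u y)) y := hd.hasFDerivAt.neg
  have hlog : HasDerivAt Real.log (-u y)⁻¹ (-u y) := Real.hasDerivAt_log hne
  have h2 : HasFDerivAt (fun z => Real.log (-u z)) ((-u y)⁻¹ • -(fderiv ℝ u y)) y :=
    by have := hlog.comp_hasFDerivAt y h1; exact this
  have h3 := h2.neg
  refine h3.congr_fderiv ?_
  ext v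
  simp [inv_neg]

theorem equation_for_phi
    (Ω : Set (EuclideanSpace ℝ (Fin 2))) (hΩ : IsOpen Ω)
    (u : EuclideanSpace ℝ (Fin 2) → ℝ)
    (hu2 : TwiceDiffOn u Ω)
    (huneg : ∀ x ∈ Ω, u x < 0)
    (hACSF : ∀ x ∈ Ω,
      ‖gradient u x‖ ^ 2 * laplacian2 u x
        - hessianBilin u x (gradient u x) (gradient u x) = 1) :
    TwiceDiffOn (fun x => -Real.log (-u x)) Ω ∧
    ∀ x ∈ Ω,
      ‖gradient (fun x => -Real.log (-u x)) x‖ ^ 2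
          * laplacian2 (fun x => -Real.log (-u x)) x
        - hessianBilin (fun x => -Real.log (-u x)) x
            (gradient (fun x => -Real.log (-u x)) x)
            (gradient (fun x => -Real.log (-u x)) x)
      = Real.exp (3 * (-Real.log (-u x))) := by
  set φ : EuclideanSpace ℝ (Fin 2) → ℝ := fun x => -Real.log (-u x) with hφ
  set F : EuclideanSpace ℝ (Fin 2) → (EuclideanSpace ℝ (Fin 2) →L[ℝ] ℝ) :=
    fun y => (-(u y)⁻¹) • fderiv ℝ u y with hF
  -- basic facts at each point of Ω
  have key : ∀ x ∈ Ω, HasFDerivAt φ (F x) x := fun x hx =>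
    hasFDerivAt_phi_aux u x (hu2 x hx).1 (huneg x hx)
  have heqF : ∀ x ∈ Ω, (fun y => fderiv ℝ φ y) =ᶠ[nhds x] F := by
    intro x hx
    filter_upwards [hΩ.mem_nhds hx] with y hy
    exact (key y hy).fderiv
  have hdiffF : ∀ x ∈ Ω, DifferentiableAt ℝ F x := by
    intro x hx
    have hne : u x ≠ 0 := (huneg x hx).ne
    exact (((hu2 x hx).1.inv hne).neg).smul (hu2 x hx).2
  have hcderiv : ∀ x ∈ Ω,
      HasFDerivAt (fun y => -(u y)⁻¹) (((u x) ^ 2)⁻¹ • fderiv ℝ u x) x := by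
    intro x hx
    have hne : u x ≠ 0 := (huneg x hx).ne
    have h1 : HasFDerivAt (fun y => (u y)⁻¹) ((-(u x ^ 2)⁻¹) • fderiv ℝ u x) x :=
      (hasDerivAt_inv hne).comp_hasFDerivAt x (hu2 x hx).1.hasFDerivAt
    have h2 := h1.neg
    refine h2.congr_fderiv ?_
    ext v
    simp
  have hHess : ∀ x ∈ Ω,
      hessianBilin φ x = (-(u x)⁻¹) • hessianBilin u x
        + ((((u x) ^ 2)⁻¹ • fderiv ℝ u x).smulRight (fderiv ℝ u x)) := by
    intro x hx
    have hFd : HasFDerivAt F ((-(u x)⁻¹) • hessianBilin u x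
        + ((((u x) ^ 2)⁻¹ • fderiv ℝ u x).smulRight (fderiv ℝ u x))) x := by
      have := (hcderiv x hx).smul (hu2 x hx).2.hasFDerivAt
      exact this
    calc hessianBilin φ x = fderiv ℝ F x := (heqF x hx).fderiv_eq
    _ = _ := hFd.fderiv
  refine ⟨fun x hx => ⟨(key x hx).differentiableAt,
      (hdiffF x hx).congr_of_eventuallyEq (heqF x hx)⟩, ?_⟩
  intro x hx
  have hne : u x ≠ 0 := (huneg x hx).ne
  set A : ℝ := -(u x)⁻¹ with hA
  -- gradient facts
  have hgu : HasGradientAt u (gradient u x) x := (hu2 x hx).1.hasGradientAt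
  have hdual : fderiv ℝ u x = InnerProductSpace.toDual ℝ _ (gradient u x) :=
    (hasGradientAt_iff_hasFDerivAt.mp hgu).fderiv
  have hgφ : gradient φ x = A • gradient u x := by
    have h2 : (InnerProductSpace.toDual ℝ (EuclideanSpace ℝ (Fin 2))) (A • gradient u x)
        = F x := by rw [map_smul, ← hdual]
    have h3 : HasGradientAt φ (A • gradient u x) x :=
      hasGradientAt_iff_hasFDerivAt.mpr (h2 ▸ key x hx)
    exact h3.gradient
  set g := gradient u x with hg
  have happly : ∀ v, fderiv ℝ u x v = inner ℝ g v := by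
    intro v; rw [hdual]; exact InnerProductSpace.toDual_apply_apply
  have hdg : fderiv ℝ u x g = ‖g‖ ^ 2 := by
    rw [happly]; exact real_inner_self_eq_norm_sq g
  have hsum : ∑ i : Fin 2, fderiv ℝ u x (EuclideanSpace.single i 1)
      * fderiv ℝ u x (EuclideanSpace.single i 1) = ‖g‖ ^ 2 := by
    have h1 : ∀ i : Fin 2, fderiv ℝ u x (EuclideanSpace.single i 1) = g i := by
      intro i
      rw [happly]
      simpa using EuclideanSpace.inner_single_right (𝕜 := ℝ) i 1 g
    simp only [h1]
    rw [← real_inner_self_eq_norm_sq]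
    rfl
  -- norms
  have hnormφ : ‖gradient φ x‖ ^ 2 = A ^ 2 * ‖g‖ ^ 2 := by
    rw [hgφ, norm_smul, mul_pow, Real.norm_eq_abs, sq_abs]
  have hB : ((u x) ^ 2)⁻¹ = A ^ 2 := by
    rw [hA]; field_simp
  -- hessian applied
  have hHapp : ∀ v w, hessianBilin φ x v w
      = A * hessianBilin u x v w + A ^ 2 * (fderiv ℝ u x v * fderiv ℝ u x w) := by
    intro v w
    rw [hHess x hx, hB]
    simp [ContinuousLinearMap.smulRight_apply, mul_assoc]
    ring
  -- laplacian
  have hlap : laplacian2 φ x = A * laplacian2 u x + A ^ 2 * ‖g‖ ^ 2 := by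
    unfold laplacian2
    rw [Finset.mul_sum, ← hsum, Finset.mul_sum, ← Finset.sum_add_distrib]
    exact Finset.sum_congr rfl fun i _ => hHapp _ _
  -- hessian at gradient
  have hQ : hessianBilin φ x (gradient φ x) (gradient φ x)
      = A ^ 3 * hessianBilin u x g g + A ^ 4 * ‖g‖ ^ 2 * ‖g‖ ^ 2 := by
    rw [hgφ, hHapp]
    simp only [map_smul, ContinuousLinearMap.smul_apply, smul_eq_mul, hdg]
    ring
  -- RHS
  have ht : (0:ℝ) < -u x := by linarith [huneg x hx]
  have hrhs : Real.exp (3 * φ x) = A ^ 3 := by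
    have hAt : A = (-u x)⁻¹ := by rw [hA, inv_neg]
    have : 3 * φ x = Real.log ((-u x)⁻¹ ^ 3) := by
      rw [Real.log_pow, Real.log_inv]
      simp only [hφ]
      push_cast
      ring
    rw [this, Real.exp_log (by positivity), hAt]
  rw [hnormφ, hlap, hQ, hrhs]
  have h1 := hACSF x hx
  linear_combination (A ^ 3) * h1

end
end

section
/- Let S ⊆ ℝ² and let u : ℝ² → ℝ be twice differentiable on S and satisfy the level-set equation of the affine curve shortening flow on S. Let A be a 2×2 real matrix with det A = 1. Then the function v(x) := u(Ax) is twice differentiable on A⁻¹(S) and satisfies the level-set equation of the affine curve shortening flow on A⁻¹(S). -/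
open Real Set

noncomputable section

/-- `u` satisfies the level-set equation of the affine curve shortening flow on `S`:
`‖∇u‖² Δu − ∇²u(∇u, ∇u) = 1` on `S`. -/
def SatisfiesACSF (u : EuclideanSpace ℝ (Fin 2) → ℝ) (S : Set (EuclideanSpace ℝ (Fin 2))) : Prop :=
  ∀ x ∈ S, ‖gradient u x‖ ^ 2 * laplacian2 u x
      - hessianBilin u x (gradient u x) (gradient u x) = 1

/- ### Auxiliary machinery -/

private abbrev E2 := EuclideanSpace ℝ (Fin 2)

/-- `Matrix.toEuclideanLin` as a continuous linear map. -/
private def Bclm (A : Matrix (Fin 2) (Fin 2) ℝ) : E2 →L[ℝ] E2 :=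
  LinearMap.toContinuousLinearMap (Matrix.toEuclideanLin A)

private lemma fderiv_formula (u : E2 → ℝ) (A : Matrix (Fin 2) (Fin 2) ℝ) (hA : A.det = 1)
    (z : E2) :
    fderiv ℝ (fun x => u (Bclm A x)) z = (fderiv ℝ u (Bclm A z)).comp (Bclm A) := by
  by_cases hd : DifferentiableAt ℝ u (Bclm A z)
  · rw [show (fun x => u (Bclm A x)) = u ∘ (Bclm A) from rfl,
      fderiv_comp z hd ((Bclm A).differentiableAt), (Bclm A).fderiv]
  · have hv : ¬ DifferentiableAt ℝ (fun x => u (Bclm A x)) z := by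
      intro hv
      apply hd
      have : u = fun w => (fun x => u (Bclm A x)) (Bclm A⁻¹ w) := by
        funext w
        congr 1
        have hinv : A * A⁻¹ = 1 := Matrix.mul_nonsing_inv A (by simp [hA])
        show w = Matrix.toEuclideanLin A (Matrix.toEuclideanLin A⁻¹ w)
        simp only [Matrix.toEuclideanLin_apply, WithLp.ofLp_toLp, Matrix.mulVec_mulVec, hinv,
          Matrix.one_mulVec, WithLp.toLp_ofLp]
      rw [this]
      have hz : DifferentiableAt ℝ (fun x => u (Bclm A x)) (Bclm A⁻¹ (Bclm A z)) := by
        have hinv : A⁻¹ * A = 1 := Matrix.nonsing_inv_mul A (by simp [hA])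
        have : Bclm A⁻¹ (Bclm A z) = z := by
          show Matrix.toEuclideanLin A⁻¹ (Matrix.toEuclideanLin A z) = z
          simp only [Matrix.toEuclideanLin_apply, WithLp.ofLp_toLp, Matrix.mulVec_mulVec, hinv,
            Matrix.one_mulVec, WithLp.toLp_ofLp]
        rwa [this]
      exact hz.comp _ (Bclm A⁻¹).differentiableAt
    rw [fderiv_zero_of_not_differentiableAt hd, fderiv_zero_of_not_differentiableAt hv]
    ext w
    simp

private lemma hess_formula (u : E2 → ℝ) (A : Matrix (Fin 2) (Fin 2) ℝ) (hA : A.det = 1) (x : E2)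
    (h2 : DifferentiableAt ℝ (fun w => fderiv ℝ u w) (Bclm A x)) :
    DifferentiableAt ℝ (fun z => fderiv ℝ (fun w => u (Bclm A w)) z) x ∧
    ∀ w₁ w₂, hessianBilin (fun w => u (Bclm A w)) x w₁ w₂
      = hessianBilin u (Bclm A x) (Bclm A w₁) (Bclm A w₂) := by
  set ψ : (E2 →L[ℝ] ℝ) →L[ℝ] (E2 →L[ℝ] ℝ) :=
    (ContinuousLinearMap.compL ℝ E2 E2 ℝ).flip (Bclm A) with hψ
  have hψap : ∀ L : E2 →L[ℝ] ℝ, ψ L = L.comp (Bclm A) := fun L => rfl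
  have heq : (fun z => fderiv ℝ (fun w => u (Bclm A w)) z)
      = fun z => ψ ((fun w => fderiv ℝ u w) (Bclm A z)) := by
    funext z
    rw [fderiv_formula u A hA z, hψap]
  have hg : DifferentiableAt ℝ (fun z => (fun w => fderiv ℝ u w) (Bclm A z)) x :=
    h2.comp x (Bclm A).differentiableAt
  have hfg : fderiv ℝ (fun z => (fun w => fderiv ℝ u w) (Bclm A z)) x
      = (fderiv ℝ (fun w => fderiv ℝ u w) (Bclm A x)).comp (Bclm A) := by
    rw [show (fun z => (fun w => fderiv ℝ u w) (Bclm A z))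
        = (fun w => fderiv ℝ u w) ∘ (Bclm A) from rfl,
      fderiv_comp x h2 (Bclm A).differentiableAt, (Bclm A).fderiv]
  constructor
  · rw [heq]
    exact (ψ.differentiableAt).comp x hg
  · intro w₁ w₂
    have : hessianBilin (fun w => u (Bclm A w)) x
        = ψ.comp ((fderiv ℝ (fun w => fderiv ℝ u w) (Bclm A x)).comp (Bclm A)) := by
      rw [hessianBilin, heq,
        show (fun z => ψ ((fun w => fderiv ℝ u w) (Bclm A z)))
          = ⇑ψ ∘ (fun z => (fun w => fderiv ℝ u w) (Bclm A z)) from rfl,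
        fderiv_comp x ψ.differentiableAt hg, ψ.fderiv, hfg]
    rw [this]
    rfl

private def e2 (i : Fin 2) : E2 := EuclideanSpace.single i 1

private lemma decomp2 (w : E2) : w = w 0 • e2 0 + w 1 • e2 1 := by
  ext i
  fin_cases i <;>
    simp [e2, PiLp.add_apply, PiLp.smul_apply, EuclideanSpace.single_apply]

private lemma bilin_expand (K : E2 →L[ℝ] E2 →L[ℝ] ℝ) (w z : E2) :
    K w z = w 0 * z 0 * K (e2 0) (e2 0) + w 0 * z 1 * K (e2 0) (e2 1)
      + w 1 * z 0 * K (e2 1) (e2 0) + w 1 * z 1 * K (e2 1) (e2 1) := by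
  conv_lhs => rw [decomp2 w, decomp2 z]
  simp only [map_add, map_smul, ContinuousLinearMap.add_apply,
    ContinuousLinearMap.smul_apply, smul_eq_mul]
  ring

private lemma lin_expand (L : E2 →L[ℝ] ℝ) (w : E2) :
    L w = w 0 * L (e2 0) + w 1 * L (e2 1) := by
  conv_lhs => rw [decomp2 w]
  simp only [map_add, map_smul, smul_eq_mul]

private lemma grad_comp (f : E2 → ℝ) (z : E2) (i : Fin 2) :
    gradient f z i = fderiv ℝ f z (e2 i) := by
  have h : (inner ℝ (gradient f z) (e2 i) : ℝ) = fderiv ℝ f z (e2 i) := by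
    rw [gradient]
    exact InnerProductSpace.toDual_symm_apply
  rw [← h]
  fin_cases i <;>
    simp only [e2, EuclideanSpace.inner_single_right, PiLp.inner_apply, EuclideanSpace.single_apply, Fin.sum_univ_two] <;> simp

private lemma norm_sq_expand (q : E2) : ‖q‖ ^ 2 = q 0 * q 0 + q 1 * q 1 := by
  rw [EuclideanSpace.norm_eq, sq_sqrt (by positivity)]
  simp [Fin.sum_univ_two, sq]

private lemma Bclm_e2 (A : Matrix (Fin 2) (Fin 2) ℝ) (j : Fin 2) :
    Bclm A (e2 j) = A 0 j • e2 0 + A 1 j • e2 1 := by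
  ext i
  have : (Bclm A (e2 j)) i = A i j := by
    show (Matrix.toEuclideanLin A (e2 j)) i = A i j
    fin_cases j <;>
      simp [Matrix.toEuclideanLin_apply, Matrix.mulVec, dotProduct, e2,
        EuclideanSpace.single_apply, Fin.sum_univ_two]
  rw [this]
  fin_cases i <;>
    simp [e2, PiLp.add_apply, PiLp.smul_apply, EuclideanSpace.single_apply]

/-- Unimodular affine invariance of the level-set equation of the affine curve
shortening flow: `v(x) = u(Ax)` is again a solution, on `A⁻¹(S)`, for `det A = 1`. -/
theorem ACSF_affine_invariance
    (S : Set (EuclideanSpace ℝ (Fin 2)))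
    (u : EuclideanSpace ℝ (Fin 2) → ℝ)
    (hu2 : TwiceDiffOn u S) (hu : SatisfiesACSF u S)
    (A : Matrix (Fin 2) (Fin 2) ℝ) (hA : A.det = 1) :
    TwiceDiffOn (fun x => u (Matrix.toEuclideanLin A x))
      ((fun x => Matrix.toEuclideanLin A x) ⁻¹' S) ∧
    SatisfiesACSF (fun x => u (Matrix.toEuclideanLin A x))
      ((fun x => Matrix.toEuclideanLin A x) ⁻¹' S) := by
  set v : E2 → ℝ := fun x => u (Bclm A x) with hv
  have hveq : (fun x => u (Matrix.toEuclideanLin A x)) = v := rfl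
  have hpre : ((fun x => Matrix.toEuclideanLin A x) ⁻¹' S) = (fun x => Bclm A x) ⁻¹' S := rfl
  rw [hveq, hpre]
  constructor
  · intro x hx
    have hy : Bclm A x ∈ S := hx
    obtain ⟨hd1, hd2⟩ := hu2 _ hy
    refine ⟨hd1.comp x (Bclm A).differentiableAt, ?_⟩
    exact (hess_formula u A hA x hd2).1
  · intro x hx
    have hy : Bclm A x ∈ S := hx
    obtain ⟨hd1, hd2⟩ := hu2 _ hy
    set y := Bclm A x with hydef
    -- components
    set p0 := gradient u y 0 with hp0
    set p1 := gradient u y 1 with hp1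
    set H := hessianBilin u y with hH
    -- fderiv u y applied: fderiv u y w = w0 * p0 + w1 * p1
    have hfd : ∀ i, fderiv ℝ u y (e2 i) = gradient u y i := fun i => (grad_comp u y i).symm
    -- q components
    have hfvx : fderiv ℝ v x = (fderiv ℝ u y).comp (Bclm A) := fderiv_formula u A hA x
    have hq : ∀ j : Fin 2, gradient v x j = A 0 j * p0 + A 1 j * p1 := by
      intro j
      rw [grad_comp v x j, hfvx]
      show fderiv ℝ u y (Bclm A (e2 j)) = _
      rw [Bclm_e2, map_add, map_smul, map_smul, hfd 0, hfd 1, smul_eq_mul, smul_eq_mul]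
    -- hessian of v
    have hhv := (hess_formula u A hA x hd2).2
    have hKij : ∀ i j : Fin 2, hessianBilin v x (e2 i) (e2 j)
        = A 0 i * A 0 j * H (e2 0) (e2 0) + A 0 i * A 1 j * H (e2 0) (e2 1)
          + A 1 i * A 0 j * H (e2 1) (e2 0) + A 1 i * A 1 j * H (e2 1) (e2 1) := by
      intro i j
      rw [hhv (e2 i) (e2 j), ← hydef, ← hH, Bclm_e2, Bclm_e2]
      simp only [map_add, map_smul, ContinuousLinearMap.add_apply,
        ContinuousLinearMap.smul_apply, smul_eq_mul]
      ring
    -- the given equation, expanded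
    have hueq := hu y hy
    rw [laplacian2, Fin.sum_univ_two, norm_sq_expand,
      bilin_expand (hessianBilin u y) (gradient u y) (gradient u y)] at hueq
    rw [← hH, ← hp0, ← hp1] at hueq
    -- expand the goal
    rw [laplacian2, Fin.sum_univ_two, norm_sq_expand,
      bilin_expand (hessianBilin v x) (gradient v x) (gradient v x)]
    rw [show (EuclideanSpace.single (0 : Fin 2) (1:ℝ)) = e2 0 from rfl,
      show (EuclideanSpace.single (1 : Fin 2) (1:ℝ)) = e2 1 from rfl] at hueq ⊢
    rw [hKij 0 0, hKij 0 1, hKij 1 0, hKij 1 1, hq 0, hq 1]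
    have hdet : A 0 0 * A 1 1 - A 0 1 * A 1 0 = 1 := by
      rw [← Matrix.det_fin_two]; exact hA
    set H00 := H (e2 0) (e2 0)
    set H01 := H (e2 0) (e2 1)
    set H10 := H (e2 1) (e2 0)
    set H11 := H (e2 1) (e2 1)
    linear_combination (A 0 0 * A 1 1 - A 0 1 * A 1 0) ^ 2 * hueq
      + ((A 0 0 * A 1 1 - A 0 1 * A 1 0) + 1) * hdet

end
end
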